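/- Let P be a real trigonometric polynomial of degree at most n, let m ≥ 2, and suppose P has at least m zeros, counting multiplicities, in an interval I of length smaller than (1/(8e))·(m/n). Then for any closed interval I' of length (1/(8e))·(m/n) with I ⊆ I', one has max_{θ∈I'} |P(θ)| ≤ (1/2)^m · n^{−m} · max_{x∈I'} |P^{(m)}(x)| and max_{θ∈I'} |P'(θ)| ≤ n · (1/2)^{m−1} · n^{−m} · max_{x∈I'} |P^{(m)}(x)|. -/

import Mathlib

open Real

/-- `P` has at least `m` zeros in `I`, counting multiplicities. -/
def HasZerosWithMult (P : ℝ → ℝ) (I : Set ℝ) (m : ℕ) : Prop :=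
  ∃ (k : ℕ) (y : Fin k → ℝ) (mult : Fin k → ℕ),
    Function.Injective y ∧ (∀ i, y i ∈ I) ∧ (∀ i, 0 < mult i) ∧
    (∑ i, mult i) = m ∧ ∀ i : Fin k, ∀ j < mult i, iteratedDeriv j P (y i) = 0

/-- Build `HasZerosWithMult` from a family indexed by any fintype, allowing zero
multiplicities. -/
lemma hasZeros_mk {f : ℝ → ℝ} {I : Set ℝ} {m : ℕ} {ι : Type} [Fintype ι]
    (y : ι → ℝ) (mult : ι → ℕ) (hinj : Function.Injective y)
    (hmem : ∀ i, y i ∈ I) (hsum : ∑ i, mult i = m)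
    (hz : ∀ i, ∀ j < mult i, iteratedDeriv j f (y i) = 0) :
    HasZerosWithMult f I m := by
  classical
  set T := {i : ι // mult i ≠ 0}
  let e : Fin (Fintype.card T) ≃ T := (Fintype.equivFin T).symm
  refine ⟨Fintype.card T, fun i => y (e i), fun i => mult (e i), ?_, fun i => hmem _, ?_, ?_,
    fun i j hj => hz _ j hj⟩
  · exact hinj.comp (Subtype.val_injective.comp e.injective)
  · exact fun i => Nat.pos_of_ne_zero (e i).2
  · rw [← hsum]
    rw [Fintype.sum_equiv e (fun i => mult (e i)) (fun t : T => mult t) (fun i => rfl)]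
    rw [show (∑ t : T, mult t) =
        ∑ i ∈ Finset.univ.filter (fun i => mult i ≠ 0), mult i from
      (Finset.sum_subtype _ (by simp) (fun i => mult i)).symm]
    exact Finset.sum_filter_ne_zero Finset.univ

lemma hasZeros_mono {f : ℝ → ℝ} {I J : Set ℝ} {m : ℕ} (hIJ : I ⊆ J)
    (h : HasZerosWithMult f I m) : HasZerosWithMult f J m := by
  obtain ⟨k, y, mult, h1, h2, h3, h4, h5⟩ := h
  exact ⟨k, y, mult, h1, fun i => hIJ (h2 i), h3, h4, h5⟩

/-- Rolle's theorem with multiplicities: if a smooth function has `M+1` zeros counting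
multiplicity in `[u,v]`, then its derivative has `M` zeros counting multiplicity there. -/
lemma rolle_mult {f : ℝ → ℝ} (hf : ContDiff ℝ (⊤ : ℕ∞) f) {u v : ℝ} {M : ℕ}
    (h : HasZerosWithMult f (Set.Icc u v) (M + 1)) :
    HasZerosWithMult (deriv f) (Set.Icc u v) M := by
  classical
  obtain ⟨k, y₀, mult₀, hinj₀, hmem₀, hpos₀, hsum₀, hzero₀⟩ := h
  -- sort the points
  set σ := Tuple.sort y₀ with hσ
  set y : Fin k → ℝ := y₀ ∘ σ with hy
  set mult : Fin k → ℕ := mult₀ ∘ σ with hmult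
  have hmono : StrictMono y :=
    (Tuple.monotone_sort y₀).strictMono_of_injective (hinj₀.comp σ.injective)
  have hinj : Function.Injective y := hmono.injective
  have hmem : ∀ i, y i ∈ Set.Icc u v := fun i => hmem₀ _
  have hpos : ∀ i, 0 < mult i := fun i => hpos₀ _
  have hsum : ∑ i, mult i = M + 1 := by
    rw [hmult, ← hsum₀]
    exact Equiv.sum_comp σ mult₀
  have hzero : ∀ i : Fin k, ∀ j < mult i, iteratedDeriv j f (y i) = 0 :=
    fun i j hj => hzero₀ _ j hj
  have hk : 0 < k := by
    rcases Nat.eq_zero_or_pos k with h0 | h0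
    · subst h0; simp at hsum
    · exact h0
  -- Rolle points between consecutive zeros
  have hR : ∀ i : Fin (k - 1), ∃ c ∈ Set.Ioo (y ⟨i.1, by omega⟩) (y ⟨i.1 + 1, by omega⟩),
      deriv f c = 0 := by
    intro i
    have hi1 : i.1 < k - 1 := i.2
    have hlt : y ⟨i.1, by omega⟩ < y ⟨i.1 + 1, by omega⟩ := hmono (by simp [Fin.lt_def])
    have h1 : f (y ⟨i.1, by omega⟩) = 0 := by
      simpa using hzero _ 0 (hpos _)
    have h2 : f (y ⟨i.1 + 1, by omega⟩) = 0 := by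
      simpa using hzero _ 0 (hpos _)
    exact exists_deriv_eq_zero hlt hf.continuous.continuousOn (h1.trans h2.symm)
  choose c hc hc0 using hR
  -- the points y j are distinct from the Rolle points
  have hyc : ∀ (j : Fin k) (i : Fin (k - 1)), y j ≠ c i := by
    intro j i
    rcases le_or_gt j.1 i.1 with hji | hji
    · have : y j ≤ y ⟨i.1, by omega⟩ := hmono.monotone (by simp [Fin.le_def, hji])
      exact ne_of_lt (lt_of_le_of_lt this (hc i).1)
    · have : y ⟨i.1 + 1, by omega⟩ ≤ y j := hmono.monotone (by simp [Fin.le_def]; omega)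
      exact ne_of_gt (lt_of_lt_of_le (hc i).2 this)
  have hcc : ∀ i i' : Fin (k - 1), i.1 < i'.1 → c i < c i' := by
    intro i i' h
    have h1 : y ⟨i.1 + 1, by omega⟩ ≤ y ⟨i'.1, by omega⟩ :=
      hmono.monotone (by simp [Fin.le_def]; omega)
    exact ((hc i).2.trans_le h1).trans (hc i').1
  -- assemble the family
  refine hasZeros_mk (ι := Fin k ⊕ Fin (k - 1)) (Sum.elim y c)
    (Sum.elim (fun i => mult i - 1) (fun _ => 1)) ?_ ?_ ?_ ?_
  · rintro (a | a) (b | b) hpq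
    · exact congrArg Sum.inl (hinj hpq)
    · exact absurd hpq (hyc a b)
    · exact absurd hpq.symm (hyc b a)
    · rcases lt_trichotomy a.1 b.1 with h | h | h
      · exact absurd hpq (ne_of_lt (hcc a b h))
      · exact congrArg Sum.inr (Fin.ext h)
      · exact absurd hpq (ne_of_gt (hcc b a h))
  · rintro (a | a)
    · exact hmem a
    · refine ⟨le_trans (hmem ⟨a.1, by omega⟩).1 (le_of_lt (hc a).1), ?_⟩
      exact le_trans (le_of_lt (hc a).2) (hmem ⟨a.1 + 1, by omega⟩).2
  · rw [Fintype.sum_sum_type]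
    have h1 : ∑ i : Fin k, (mult i - 1) + k = M + 1 := by
      rw [← hsum]
      rw [show (∑ i : Fin k, mult i) = ∑ i : Fin k, ((mult i - 1) + 1) from
        Finset.sum_congr rfl fun i _ => by have := hpos i; omega]
      rw [Finset.sum_add_distrib]
      simp
    have h2 : (∑ _i : Fin (k - 1), (1 : ℕ)) = k - 1 := by simp
    simp only [Sum.elim_inl, Sum.elim_inr] at *
    omega
  · rintro (a | a) j hj
    · simp only [Sum.elim_inl] at hj ⊢
      have hj1 : j + 1 < mult a := by have := hpos a; omega
      have := hzero a (j + 1) hj1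
      rwa [iteratedDeriv_succ'] at this
    · simp only [Sum.elim_inr] at hj ⊢
      interval_cases j
      simpa using hc0 a

/-- Iterated Rolle: `M+1` zeros with multiplicity give a zero of the `M`-th derivative. -/
lemma exists_iteratedDeriv_zero {f : ℝ → ℝ} (hf : ContDiff ℝ (⊤ : ℕ∞) f) {u v : ℝ} (M : ℕ)
    (h : HasZerosWithMult f (Set.Icc u v) (M + 1)) :
    ∃ ξ ∈ Set.Icc u v, iteratedDeriv M f ξ = 0 := by
  induction M generalizing f with
  | zero =>
    obtain ⟨k, y, mult, hinj, hmem, hpos, hsum, hzero⟩ := h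
    have : ∃ i, mult i ≠ 0 := by
      by_contra hcon
      push_neg at hcon
      simp [hcon] at hsum
    obtain ⟨i, hi⟩ := this
    exact ⟨y i, hmem i, by simpa using hzero i 0 (Nat.pos_of_ne_zero hi)⟩
  | succ M ih =>
    have hd : ContDiff ℝ (⊤ : ℕ∞) (deriv f) := (contDiff_infty_iff_deriv.mp hf).2
    obtain ⟨ξ, hξ, hξ0⟩ := ih hd (rolle_mult hf h)
    exact ⟨ξ, hξ, by rwa [iteratedDeriv_succ']⟩

/-- Linearity of iterated derivatives for smooth functions. -/
lemma iteratedDeriv_comb {f g : ℝ → ℝ} (hf : ContDiff ℝ (⊤ : ℕ∞) f)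
    (hg : ContDiff ℝ (⊤ : ℕ∞) g) (c d : ℝ) (M : ℕ) :
    iteratedDeriv M (fun x => c * f x - d * g x) =
      fun x => c * iteratedDeriv M f x - d * iteratedDeriv M g x := by
  induction M with
  | zero => simp [iteratedDeriv_zero]
  | succ M ih =>
    funext x
    rw [iteratedDeriv_succ, ih, iteratedDeriv_succ, iteratedDeriv_succ]
    have hdf : DifferentiableAt ℝ (iteratedDeriv M f) x :=
      (hf.differentiable_iteratedDeriv M (by exact_mod_cast lt_top_iff_ne_top.2 (by simp))).differentiableAt
    have hdg : DifferentiableAt ℝ (iteratedDeriv M g) x :=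
      (hg.differentiable_iteratedDeriv M (by exact_mod_cast lt_top_iff_ne_top.2 (by simp))).differentiableAt
    rw [deriv_fun_sub (hdf.const_mul c) (hdg.const_mul d), deriv_const_mul c hdf,
      deriv_const_mul d hdg]

open Polynomial in
lemma iteratedDeriv_polyeval (M : ℕ) : ∀ (p : ℝ[X]),
    iteratedDeriv M (fun x => p.eval x) = fun x => (derivative^[M] p).eval x := by
  induction M with
  | zero => simp [iteratedDeriv_zero]
  | succ M ih =>
    intro p
    rw [iteratedDeriv_succ']
    have : deriv (fun x => p.eval x) = fun x => (derivative p).eval x := by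
      funext x; exact Polynomial.deriv (p := p)
    rw [this, ih (derivative p), Function.iterate_succ_apply]

open Polynomial in
lemma iterate_derivative_monic {p : ℝ[X]} {M : ℕ} (hdeg : p.natDegree = M)
    (hco : p.coeff M = 1) : derivative^[M] p = C ((M.factorial : ℝ)) := by
  have h1 : (derivative^[M] p).natDegree ≤ 0 := by
    have := p.natDegree_iterate_derivative M
    omega
  rw [Polynomial.eq_C_of_natDegree_le_zero h1]
  congr 1
  rw [Polynomial.coeff_iterate_derivative, zero_add, Nat.descFactorial_self, hco]
  simp

open Polynomial in
lemma contDiff_polyeval (p : ℝ[X]) : ContDiff ℝ (⊤ : ℕ∞) fun x : ℝ => p.eval x := by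
  induction p using Polynomial.induction_on' with
  | add p q hp hq => simpa [eval_add] using hp.add hq
  | monomial n a => simpa [eval_monomial] using contDiff_const.mul (contDiff_id.pow n)

open Polynomial in
/-- Main estimate: a smooth function with `M` zeros counting multiplicity in `[u,v]`
satisfies `|f θ| * M! ≤ (v-u)^M * sup |f^{(M)}|` on `[u,v]`. -/
lemma main_bound {f : ℝ → ℝ} (hf : ContDiff ℝ (⊤ : ℕ∞) f) (M : ℕ) {u v : ℝ} (huv : u ≤ v)
    (hz : HasZerosWithMult f (Set.Icc u v) M) {θ : ℝ} (hθ : θ ∈ Set.Icc u v) :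
    |f θ| * M.factorial ≤
      (v - u) ^ M * sSup ((fun x => |iteratedDeriv M f x|) '' Set.Icc u v) := by
  classical
  obtain ⟨k, y, mult, hinj, hmem, hpos, hsum, hzero⟩ := hz
  set S := sSup ((fun x => |iteratedDeriv M f x|) '' Set.Icc u v) with hS
  have hcont : Continuous (iteratedDeriv M f) :=
    hf.continuous_iteratedDeriv M (by exact_mod_cast le_top)
  have hbdd : BddAbove ((fun x => |iteratedDeriv M f x|) '' Set.Icc u v) :=
    (isCompact_Icc.image_of_continuousOn hcont.abs.continuousOn).bddAbove
  have hSle : ∀ x ∈ Set.Icc u v, |iteratedDeriv M f x| ≤ S :=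
    fun x hx => le_csSup hbdd ⟨x, hx, rfl⟩
  have hS0 : 0 ≤ S := le_trans (abs_nonneg _) (hSle θ hθ)
  have hvu : 0 ≤ v - u := sub_nonneg.2 huv
  by_cases hθy : ∃ i, y i = θ
  · obtain ⟨i, hi⟩ := hθy
    have : f θ = 0 := by rw [← hi]; simpa using hzero i 0 (hpos i)
    rw [this]
    simpa using mul_nonneg (pow_nonneg hvu M) hS0
  -- the auxiliary polynomial
  push_neg at hθy
  set q : ℝ[X] := ∏ i, (X - C (y i)) ^ mult i with hq
  have hq_eval : ∀ x : ℝ, q.eval x = ∏ i, (x - y i) ^ mult i := by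
    intro x; simp [hq, eval_prod]
  have hmonic : q.Monic := monic_prod_of_monic _ _ fun i _ => (monic_X_sub_C (y i)).pow _
  have hqdeg : q.natDegree = M := by
    rw [hq, natDegree_prod _ _ fun i _ => pow_ne_zero _ (X_sub_C_ne_zero (y i))]
    simp [natDegree_pow, hsum]
  have hco : q.coeff M = 1 := by
    have := hmonic.coeff_natDegree
    rwa [hqdeg] at this
  have hqM : derivative^[M] q = C ((M.factorial : ℝ)) := iterate_derivative_monic hqdeg hco
  -- zeros of the polynomial
  have hqz : ∀ i : Fin k, ∀ j < mult i, iteratedDeriv j (fun x => q.eval x) (y i) = 0 := by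
    intro i j hj
    rw [iteratedDeriv_polyeval]
    have hdvd : (X - C (y i)) ^ (mult i - j) ∣ derivative^[j] q :=
      pow_sub_dvd_iterate_derivative_of_pow_dvd j
        (Finset.dvd_prod_of_mem (fun i => (X - C (y i)) ^ mult i) (Finset.mem_univ i))
    obtain ⟨r, hr⟩ := hdvd
    simp only [hr, eval_mul, eval_pow, eval_sub, eval_X, eval_C, sub_self]
    rw [zero_pow (by omega : mult i - j ≠ 0), zero_mul]
  -- the auxiliary function
  set g : ℝ → ℝ := fun x => q.eval θ * f x - f θ * q.eval x with hg
  have hqc : ContDiff ℝ (⊤ : ℕ∞) fun x : ℝ => q.eval x := contDiff_polyeval q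
  have hgc : ContDiff ℝ (⊤ : ℕ∞) g := (contDiff_const.mul hf).sub (contDiff_const.mul hqc)
  have hgit : ∀ j : ℕ, iteratedDeriv j g =
      fun x => q.eval θ * iteratedDeriv j f x - f θ * iteratedDeriv j (fun x => q.eval x) x :=
    fun j => iteratedDeriv_comb hf hqc _ _ j
  have hgz : HasZerosWithMult g (Set.Icc u v) (M + 1) := by
    refine hasZeros_mk (ι := Option (Fin k)) (fun o => o.elim θ y)
      (fun o => o.elim 1 mult) ?_ ?_ ?_ ?_
    · rintro (_ | a) (_ | b) hab
      · rfl
      · exact absurd hab.symm (hθy b)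
      · exact absurd hab (hθy a)
      · exact congrArg some (hinj hab)
    · rintro (_ | a)
      · exact hθ
      · exact hmem a
    · rw [Fintype.sum_option]
      simp only [Option.elim]
      omega
    · rintro (_ | a) j hj
      · simp only [Option.elim] at hj ⊢
        interval_cases j
        simp only [iteratedDeriv_zero, hg]
        ring
      · simp only [Option.elim] at hj ⊢
        rw [hgit j]
        show eval θ q * iteratedDeriv j f (y a) -
          f θ * iteratedDeriv j (fun x => eval x q) (y a) = 0
        rw [hzero a j hj, hqz a j hj]
        ring
  obtain ⟨ξ, hξ, hξ0⟩ := exists_iteratedDeriv_zero hgc M hgz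
  rw [hgit M, iteratedDeriv_polyeval, hqM] at hξ0
  simp only [eval_C] at hξ0
  have hkey : f θ * (M.factorial : ℝ) = q.eval θ * iteratedDeriv M f ξ := by linarith
  have habs : |f θ| * (M.factorial : ℝ) = |q.eval θ| * |iteratedDeriv M f ξ| := by
    calc |f θ| * (M.factorial : ℝ) = |f θ * (M.factorial : ℝ)| := by
          rw [abs_mul, abs_of_nonneg (by positivity : (0:ℝ) ≤ (M.factorial : ℝ))]
      _ = |eval θ q * iteratedDeriv M f ξ| := by rw [hkey]
      _ = |eval θ q| * |iteratedDeriv M f ξ| := abs_mul _ _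
  rw [habs]
  have h1 : |q.eval θ| ≤ (v - u) ^ M := by
    rw [hq_eval, Finset.abs_prod]
    calc ∏ i, |(θ - y i) ^ mult i| ≤ ∏ i, (v - u) ^ mult i := by
          refine Finset.prod_le_prod (fun i _ => abs_nonneg _) fun i _ => ?_
          rw [abs_pow]
          refine pow_le_pow_left₀ (abs_nonneg _) ?_ _
          rw [abs_sub_le_iff]
          constructor <;> [linarith [hθ.1, hθ.2, (hmem i).1, (hmem i).2];
            linarith [hθ.1, hθ.2, (hmem i).1, (hmem i).2]]
      _ = (v - u) ^ M := by rw [Finset.prod_pow_eq_pow_sum, hsum]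
  exact mul_le_mul h1 (hSle ξ hξ) (abs_nonneg _) (pow_nonneg hvu M)

lemma pow_self_le_exp_mul_factorial : ∀ m : ℕ, (m : ℝ) ^ m ≤ Real.exp 1 ^ m * m.factorial := by
  intro m
  induction m with
  | zero => simp
  | succ m ih =>
    have he : (0:ℝ) < Real.exp 1 := Real.exp_pos 1
    have key : ((m + 1 : ℕ) : ℝ) ^ m ≤ Real.exp 1 * (m : ℝ) ^ m := by
      rcases Nat.eq_zero_or_pos m with h0 | h0
      · subst h0; simpa using Real.one_le_exp (by norm_num)
      · have hm0 : (0:ℝ) < m := by exact_mod_cast h0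
        have h1 : ((m + 1 : ℕ) : ℝ) = (m : ℝ) * (1 + 1 / m) := by
          field_simp
          push_cast
          ring
        have h2 : (1 + 1 / (m:ℝ)) ^ m ≤ Real.exp 1 := by
          have := Real.add_one_le_exp (1 / (m:ℝ))
          calc (1 + 1 / (m:ℝ)) ^ m ≤ Real.exp (1 / m) ^ m := by
                apply pow_le_pow_left₀ (by positivity)
                linarith
            _ = Real.exp ((m : ℝ) * (1 / m)) := by
                rw [← Real.exp_nat_mul]
            _ = Real.exp 1 := by
                rw [mul_one_div, div_self (ne_of_gt hm0)]
        calc ((m + 1 : ℕ) : ℝ) ^ m = (m:ℝ) ^ m * (1 + 1/(m:ℝ)) ^ m := by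
              rw [h1, mul_pow]
          _ ≤ (m:ℝ) ^ m * Real.exp 1 := by
              apply mul_le_mul_of_nonneg_left h2 (by positivity)
          _ = Real.exp 1 * (m:ℝ) ^ m := by ring
    have hfac : (Nat.factorial (m+1) : ℝ) = (m + 1 : ℕ) * (Nat.factorial m : ℝ) := by
      rw [Nat.factorial_succ]; push_cast; ring
    calc ((m + 1 : ℕ) : ℝ) ^ (m + 1) = ((m+1:ℕ):ℝ) * ((m+1:ℕ):ℝ) ^ m := by ring
      _ ≤ ((m+1:ℕ):ℝ) * (Real.exp 1 * (m:ℝ) ^ m) := by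
          apply mul_le_mul_of_nonneg_left key (by positivity)
      _ ≤ ((m+1:ℕ):ℝ) * (Real.exp 1 * (Real.exp 1 ^ m * m.factorial)) := by
          apply mul_le_mul_of_nonneg_left _ (by positivity)
          exact mul_le_mul_of_nonneg_left ih (le_of_lt he)
      _ = Real.exp 1 ^ (m+1) * ((m + 1 : ℕ) * (Nat.factorial m : ℝ)) := by ring
      _ = Real.exp 1 ^ (m+1) * (Nat.factorial (m+1) : ℝ) := by rw [hfac]

theorem stmt7 (n m : ℕ) (hn : 0 < n) (hm : 2 ≤ m) (a b : ℕ → ℝ) (P : ℝ → ℝ)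
    (hP : ∀ x, P x = ∑ k ∈ Finset.range (n + 1),
      (a k * Real.cos (k * x) + b k * Real.sin (k * x)))
    (s t u v : ℝ) (hst : s ≤ t)
    (hlen : t - s < 1 / (8 * Real.exp 1) * ((m : ℝ) / n))
    (hz : HasZerosWithMult P (Set.Icc s t) m)
    (hlen' : v - u = 1 / (8 * Real.exp 1) * ((m : ℝ) / n))
    (hsub : Set.Icc s t ⊆ Set.Icc u v) :
    (∀ θ ∈ Set.Icc u v,
      |P θ| ≤ (1 / 2 : ℝ) ^ m * (1 / (n : ℝ)) ^ m *
        sSup ((fun x => |iteratedDeriv m P x|) '' Set.Icc u v)) ∧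
    (∀ θ ∈ Set.Icc u v,
      |deriv P θ| ≤ (n : ℝ) * (1 / 2 : ℝ) ^ (m - 1) * (1 / (n : ℝ)) ^ m *
        sSup ((fun x => |iteratedDeriv m P x|) '' Set.Icc u v)) := by
  have hE : (0:ℝ) < Real.exp 1 := Real.exp_pos 1
  have hE4 : Real.exp 1 ≤ 4 := by
    have := Real.exp_one_lt_d9; linarith
  have hnR : (0:ℝ) < n := by exact_mod_cast hn
  have hmR : (2:ℝ) ≤ m := by exact_mod_cast hm
  set E := Real.exp 1 with hEdef
  -- smoothness of P
  have hPe : P = fun x => ∑ k ∈ Finset.range (n + 1),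
      (a k * Real.cos (k * x) + b k * Real.sin (k * x)) := funext hP
  have hsmooth : ContDiff ℝ (⊤ : ℕ∞) P := by
    rw [hPe]
    apply ContDiff.sum
    intro k _
    exact (contDiff_const.mul (Real.contDiff_cos.comp (contDiff_const.mul contDiff_id))).add
      (contDiff_const.mul (Real.contDiff_sin.comp (contDiff_const.mul contDiff_id)))
  have hL : v - u = (m : ℝ) / (8 * E * n) := by
    rw [hlen']; field_simp
  have hLpos : 0 < v - u := by
    rw [hL]; positivity
  have huv : u ≤ v := by linarith
  have hz' : HasZerosWithMult P (Set.Icc u v) m := hasZeros_mono hsub hz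
  set S := sSup ((fun x => |iteratedDeriv m P x|) '' Set.Icc u v) with hSdef
  -- positivity of S
  have hScont : Continuous (iteratedDeriv m P) :=
    hsmooth.continuous_iteratedDeriv m (by exact_mod_cast le_top)
  have hbdd : BddAbove ((fun x => |iteratedDeriv m P x|) '' Set.Icc u v) :=
    (isCompact_Icc.image_of_continuousOn hScont.abs.continuousOn).bddAbove
  have hS0 : 0 ≤ S := le_trans (abs_nonneg _)
    (le_csSup hbdd ⟨u, Set.left_mem_Icc.2 huv, rfl⟩)
  have hfac1 : (0:ℝ) < m.factorial := by exact_mod_cast m.factorial_pos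
  have hfac2 : (0:ℝ) < (m-1).factorial := by exact_mod_cast (m-1).factorial_pos
  have hm1 : m - 1 + 1 = m := by omega
  have hfacsplit : (m.factorial : ℝ) = m * ((m-1).factorial : ℝ) := by
    exact_mod_cast (Nat.mul_factorial_pred (by omega : m ≠ 0)).symm
  have hmm : (m:ℝ) ^ m ≤ E ^ m * m.factorial := pow_self_le_exp_mul_factorial m
  have hmm1 : (m:ℝ) ^ (m-1) ≤ E ^ m * (m-1).factorial := by
    have hsplit : (m:ℝ) ^ m = (m:ℝ) ^ (m-1) * m := by
      have h := pow_succ (m:ℝ) (m-1)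
      rwa [hm1] at h
    rw [hfacsplit] at hmm
    have h2 : (m:ℝ) ^ (m-1) * m ≤ E ^ m * ((m-1).factorial : ℝ) * m := by
      rw [← hsplit]
      calc (m:ℝ)^m ≤ E^m * ((m:ℝ) * (m-1).factorial) := hmm
        _ = E ^ m * ((m-1).factorial : ℝ) * m := by ring
    exact le_of_mul_le_mul_right h2 (by linarith)
  have hinv8 : E * (8 * E * (n:ℝ))⁻¹ = 1 / (8 * n) := by
    field_simp
  have hLm : ∀ j : ℕ, (v - u) ^ j = (m:ℝ) ^ j * ((8 * E * (n:ℝ))⁻¹) ^ j := by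
    intro j
    rw [hL, div_eq_mul_inv, mul_pow]
  -- Part 1
  have hA : (v - u) ^ m ≤ (1/2 : ℝ) ^ m * (1/(n:ℝ)) ^ m * m.factorial := by
    calc (v - u) ^ m = (m:ℝ) ^ m * ((8 * E * (n:ℝ))⁻¹) ^ m := hLm m
      _ ≤ (E ^ m * m.factorial) * ((8 * E * (n:ℝ))⁻¹) ^ m := by
          apply mul_le_mul_of_nonneg_right hmm (by positivity)
      _ = (m.factorial : ℝ) * (E * (8 * E * (n:ℝ))⁻¹) ^ m := by
          rw [mul_pow]; ring
      _ = (m.factorial : ℝ) * (1 / (8 * n)) ^ m := by rw [hinv8]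
      _ ≤ (m.factorial : ℝ) * (1 / (2 * n)) ^ m := by
          apply mul_le_mul_of_nonneg_left _ (le_of_lt hfac1)
          apply pow_le_pow_left₀ (by positivity)
          apply div_le_div_of_nonneg_left (by norm_num) (by positivity) (by linarith)
      _ = (1/2 : ℝ) ^ m * (1/(n:ℝ)) ^ m * m.factorial := by
          rw [← mul_pow]
          have : (1/2 : ℝ) * (1/(n:ℝ)) = 1 / (2 * n) := by
            rw [div_mul_div_comm, one_mul]
          rw [this]; ring
  have part1 : ∀ θ ∈ Set.Icc u v, |P θ| ≤ (1/2 : ℝ) ^ m * (1/(n:ℝ)) ^ m * S := by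
    intro θ hθ
    have h := main_bound hsmooth m huv hz' hθ
    have h2 : (v - u) ^ m * S ≤ ((1/2 : ℝ) ^ m * (1/(n:ℝ)) ^ m * S) * m.factorial := by
      calc (v - u) ^ m * S ≤ ((1/2 : ℝ) ^ m * (1/(n:ℝ)) ^ m * m.factorial) * S :=
            mul_le_mul_of_nonneg_right hA hS0
        _ = ((1/2 : ℝ) ^ m * (1/(n:ℝ)) ^ m * S) * m.factorial := by ring
    exact le_of_mul_le_mul_right (le_trans h h2) hfac1
  -- Part 2
  have hne : (n:ℝ) ≠ 0 := ne_of_gt hnR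
  have hdsmooth : ContDiff ℝ (⊤ : ℕ∞) (deriv P) := (contDiff_infty_iff_deriv.mp hsmooth).2
  have hzd : HasZerosWithMult (deriv P) (Set.Icc u v) (m - 1) := by
    apply rolle_mult hsmooth
    rw [hm1]
    exact hz'
  have hset : (fun x => |iteratedDeriv (m-1) (deriv P) x|) = fun x => |iteratedDeriv m P x| := by
    funext x
    rw [← iteratedDeriv_succ', hm1]
  have hpowinv : (1/(n:ℝ)) ^ m = (1/(n:ℝ)) ^ (m-1) * (1/(n:ℝ)) := by
    have h := pow_succ (1/(n:ℝ)) (m-1)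
    rwa [hm1] at h
  have hpowE : E ^ m = E ^ (m-1) * E := by
    have h := pow_succ E (m-1)
    rwa [hm1] at h
  have hrhs : (n:ℝ) * (1/2 : ℝ) ^ (m-1) * (1/(n:ℝ)) ^ m = (1/(2*(n:ℝ))) ^ (m-1) := by
    calc (n:ℝ) * (1/2 : ℝ) ^ (m-1) * (1/(n:ℝ)) ^ m
        = (n:ℝ) * (1/2 : ℝ) ^ (m-1) * ((1/(n:ℝ)) ^ (m-1) * (1/(n:ℝ))) := by rw [hpowinv]
      _ = ((1/2 : ℝ) * (1/(n:ℝ))) ^ (m-1) * ((n:ℝ) * (1/(n:ℝ))) := by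
          rw [mul_pow]; ring
      _ = (1/(2*(n:ℝ))) ^ (m-1) * 1 := by
          rw [div_mul_div_comm, one_mul, mul_one_div_cancel hne]
      _ = (1/(2*(n:ℝ))) ^ (m-1) := mul_one _
  have hE4m : E ≤ (4:ℝ) ^ (m-1) := by
    calc E ≤ 4 := hE4
      _ = (4:ℝ) ^ 1 := (pow_one 4).symm
      _ ≤ (4:ℝ) ^ (m-1) := pow_le_pow_right₀ (by norm_num) (by omega)
  have hB : (v - u) ^ (m-1) ≤
      ((n:ℝ) * (1/2 : ℝ) ^ (m-1) * (1/(n:ℝ)) ^ m) * (m-1).factorial := by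
    have h48 : (4:ℝ) * (1/(8*(n:ℝ))) = 1/(2*(n:ℝ)) := by
      field_simp
      ring
    calc (v - u) ^ (m-1) = (m:ℝ) ^ (m-1) * ((8 * E * (n:ℝ))⁻¹) ^ (m-1) := hLm (m-1)
      _ ≤ (E ^ m * (m-1).factorial) * ((8 * E * (n:ℝ))⁻¹) ^ (m-1) := by
          apply mul_le_mul_of_nonneg_right hmm1 (by positivity)
      _ = ((m-1).factorial : ℝ) * E * (E * (8 * E * (n:ℝ))⁻¹) ^ (m-1) := by
          rw [hpowE, mul_pow]; ring
      _ = ((m-1).factorial : ℝ) * E * (1/(8*(n:ℝ))) ^ (m-1) := by rw [hinv8]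
      _ ≤ ((m-1).factorial : ℝ) * ((4:ℝ) ^ (m-1)) * (1/(8*(n:ℝ))) ^ (m-1) := by
          apply mul_le_mul_of_nonneg_right _ (by positivity)
          exact mul_le_mul_of_nonneg_left hE4m (le_of_lt hfac2)
      _ = ((m-1).factorial : ℝ) * ((4:ℝ) * (1/(8*(n:ℝ)))) ^ (m-1) := by
          rw [mul_pow]; ring
      _ = ((m-1).factorial : ℝ) * (1/(2*(n:ℝ))) ^ (m-1) := by rw [h48]
      _ = ((n:ℝ) * (1/2 : ℝ) ^ (m-1) * (1/(n:ℝ)) ^ m) * (m-1).factorial := by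
          rw [hrhs]; ring
  have part2 : ∀ θ ∈ Set.Icc u v,
      |deriv P θ| ≤ (n:ℝ) * (1/2 : ℝ) ^ (m-1) * (1/(n:ℝ)) ^ m * S := by
    intro θ hθ
    have h := main_bound hdsmooth (m-1) huv hzd hθ
    rw [hset] at h
    have h2 : (v - u) ^ (m-1) * S ≤
        ((n:ℝ) * (1/2 : ℝ) ^ (m-1) * (1/(n:ℝ)) ^ m * S) * (m-1).factorial := by
      calc (v - u) ^ (m-1) * S
          ≤ (((n:ℝ) * (1/2 : ℝ) ^ (m-1) * (1/(n:ℝ)) ^ m) * (m-1).factorial) * S :=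
            mul_le_mul_of_nonneg_right hB hS0
        _ = ((n:ℝ) * (1/2 : ℝ) ^ (m-1) * (1/(n:ℝ)) ^ m * S) * (m-1).factorial := by ring
    exact le_of_mul_le_mul_right (le_trans h h2) hfac2
  exact ⟨part1, part2⟩
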